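/- Let f be an entropy generator and γ ∈ ℝ, and suppose that for all probability distributions P, Q on ℕ one has H_f(P⊗Q) = H_f(P) + H_f(Q) − γ·H_f(P)·H_f(Q). Then H_f is a Tsallis entropy: there exists q > 0 with q ≠ 1 such that f(x) = (x − x^q)/(1 − q) for all x ∈ [0,∞), and moreover γ = q − 1. -/

import Mathlib

/-- A probability distribution on ℕ: nonnegative weights summing to 1. -/
def IsProbDist (p : ℕ → ℝ) : Prop := (∀ i, 0 ≤ p i) ∧ HasSum p 1

/-- An entropy generator: real analytic on `[0,∞)`, strictly convex on `[0,∞)`,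
with `f 0 = f 1 = 0` and `f' 1 = 1`. -/
def IsEntropyGenerator (f : ℝ → ℝ) : Prop :=
  (∀ x ∈ Set.Ici (0 : ℝ), AnalyticAt ℝ f x) ∧
  StrictConvexOn ℝ (Set.Ici (0 : ℝ)) f ∧
  f 0 = 0 ∧ f 1 = 0 ∧ deriv f 1 = 1

open Filter Set



/-- Identity theorem on `Ici 0`. -/
lemma eqOn_Ici_of_eventuallyEq {f g : ℝ → ℝ}
    (hf : ∀ x ∈ Set.Ici (0:ℝ), AnalyticAt ℝ f x)
    (hg : ∀ x ∈ Set.Ici (0:ℝ), AnalyticAt ℝ g x)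
    (h0 : (fun x => f x - g x) =ᶠ[nhds 0] 0) : ∀ x ∈ Set.Ici (0:ℝ), f x = g x := by
  set F := fun x => f x - g x with hF
  set U := {x : ℝ | AnalyticAt ℝ F x} with hU
  have hUopen : IsOpen U := isOpen_analyticAt ℝ F
  have hsub : Set.Ici (0:ℝ) ⊆ U := fun x hx => ((hf x hx).sub (hg x hx))
  have h0U : (0:ℝ) ∈ U := hsub (Set.mem_Ici.mpr (le_refl 0))
  have hIci : Set.Ici (0:ℝ) ⊆ connectedComponentIn U 0 :=
    isPreconnected_Ici.subset_connectedComponentIn (Set.mem_Ici.mpr (le_refl 0)) hsub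
  have hA : AnalyticOnNhd ℝ F (connectedComponentIn U 0) :=
    fun x hx => connectedComponentIn_subset U 0 hx
  have hzero : Set.EqOn F 0 (connectedComponentIn U 0) :=
    hA.eqOn_zero_of_preconnected_of_eventuallyEq_zero
      isPreconnected_connectedComponentIn (mem_connectedComponentIn h0U) h0
  intro x hx
  have := hzero (hIci hx)
  simpa [hF, sub_eq_zero] using this

/-- Right-sided vanishing of an analytic function propagates to a neighborhood. -/
lemma eventually_zero_of_right {φ : ℝ → ℝ} {δ : ℝ} (hδ : 0 < δ) (ha : AnalyticAt ℝ φ 0)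
    (h : ∀ t, 0 ≤ t → t < δ → φ t = 0) : φ =ᶠ[nhds 0] 0 := by
  refine ha.frequently_zero_iff_eventually_zero.mp ?_
  have h1 : ∀ᶠ z in nhdsWithin 0 (Set.Ioi 0), φ z = 0 := by
    filter_upwards [Ioo_mem_nhdsGT_of_mem (by constructor <;> [exact le_refl 0; exact hδ])]
      with z hz
    exact h z hz.1.le hz.2
  exact (h1.frequently).filter_mono (nhdsWithin_mono 0 (fun z hz => ne_of_gt hz))

/-- Doubling relation plus differentiability at 0 forces linearity. -/
lemma doubling_linear {φ : ℝ → ℝ} {δ : ℝ} (hδ : 0 < δ) (hdiff : DifferentiableAt ℝ φ 0)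
    (h0 : φ 0 = 0) (hd : ∀ t, 0 ≤ t → t ≤ δ → φ (2*t) = 2 * φ t) :
    ∀ t, 0 ≤ t → t ≤ 2*δ → φ t = deriv φ 0 * t := by
  intro t ht ht2
  rcases eq_or_lt_of_le ht with rfl | htpos
  · simp [h0]
  set c := deriv φ 0 with hc
  set ψ : ℝ → ℝ := fun s => φ s - c * s with hψ
  have hψ0 : ψ 0 = 0 := by simp [hψ, h0]
  have hψd : ∀ s, 0 ≤ s → s ≤ δ → ψ (2*s) = 2 * ψ s := by
    intro s hs hs'; simp only [hψ]; rw [hd s hs hs']; ring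
  have hder : HasDerivAt ψ 0 0 := by
    have h1 : HasDerivAt φ c 0 := hdiff.hasDerivAt
    have h2 : HasDerivAt (fun s : ℝ => c * s) c 0 := by
      simpa using (hasDerivAt_id (0:ℝ)).const_mul c
    have h3 := h1.sub h2; rw [sub_self] at h3; exact h3
  have key : ∀ k : ℕ, ψ t = 2^k * ψ (t / 2^k) := by
    intro k
    induction k with
    | zero => simp
    | succ k ih =>
      rw [ih]
      have h1 : 0 ≤ t / 2^(k+1) := by positivity
      have h2 : t / 2^(k+1) ≤ δ := by
        rw [div_le_iff₀ (by positivity)]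
        calc t ≤ 2*δ := ht2
        _ ≤ δ * 2^(k+1) := by
              rw [mul_comm]
              gcongr
              calc (2:ℝ) = 2^1 := by norm_num
              _ ≤ 2^(k+1) := by gcongr <;> norm_num
      have := hψd _ h1 h2
      have harg : 2 * (t / 2^(k+1)) = t / 2^k := by
        field_simp; ring
      rw [harg] at this
      rw [this]; ring
  -- slopes along t/2^k are constant and tend to 0
  have hslope : Tendsto (slope ψ 0) (nhdsWithin 0 {(0:ℝ)}ᶜ) (nhds 0) :=
    hasDerivAt_iff_tendsto_slope.mp hder
  have hy : Tendsto (fun k : ℕ => t / 2^k) atTop (nhdsWithin 0 {(0:ℝ)}ᶜ) := by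
    apply tendsto_nhdsWithin_of_tendsto_nhds_of_eventually_within
    · have : Tendsto (fun k : ℕ => ((1:ℝ)/2)^k) atTop (nhds 0) :=
        tendsto_pow_atTop_nhds_zero_of_lt_one (by norm_num) (by norm_num)
      have := this.const_mul t
      simpa [div_eq_mul_inv, mul_comm, mul_pow] using this
    · filter_upwards with k
      have : t / 2^k ≠ 0 := by positivity
      simpa using this
  have hcomp : Tendsto (fun k : ℕ => slope ψ 0 (t / 2^k)) atTop (nhds 0) := hslope.comp hy
  have hconst : ∀ k : ℕ, slope ψ 0 (t / 2^k) = ψ t / t := by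
    intro k
    have h2k : (2:ℝ)^k ≠ 0 := by positivity
    rw [slope_def_field]
    have : ψ (t / 2^k) = ψ t / 2^k := by
      rw [key k]; field_simp
    rw [this, hψ0]
    field_simp
    simp only [mul_zero, sub_zero, mul_div_assoc, div_self htpos.ne', mul_one]
  rw [funext hconst] at hcomp
  have : ψ t / t = 0 := tendsto_nhds_unique tendsto_const_nhds hcomp
  have hψt : ψ t = 0 := by
    have := mul_eq_zero_of_left this t
    rwa [div_mul_cancel₀ _ (ne_of_gt htpos)] at this
  have : φ t - c * t = 0 := hψt
  linarith

/-- Uniqueness of power series coefficients: if `∑ aₙ yⁿ = 0` near 0 then all `aₙ = 0`. -/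
lemma coeffs_zero_of_hasSum_zero {a : ℕ → ℝ}
    (h : ∀ᶠ y in nhds (0:ℝ), HasSum (fun n => a n * y ^ n) 0) : ∀ n, a n = 0 := by
  have hp : HasFPowerSeriesAt (fun _ : ℝ => (0:ℝ)) (FormalMultilinearSeries.ofScalars ℝ a) 0 := by
    rw [hasFPowerSeriesAt_iff]
    filter_upwards [h] with z hz
    have hcoeff : ∀ n, (FormalMultilinearSeries.ofScalars ℝ a).coeff n = a n := by
      intro n
      simp [FormalMultilinearSeries.coeff, FormalMultilinearSeries.ofScalars, List.ofFn_const, List.prod_replicate, Pi.one_def]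
    simpa [hcoeff, smul_eq_mul, mul_comm] using hz
  have : FormalMultilinearSeries.ofScalars ℝ a = 0 :=
    hp.eq_zero_of_eventually (by filter_upwards with x using rfl)
  intro n
  have := congrFun this n
  rwa [FormalMultilinearSeries.zero_apply, FormalMultilinearSeries.ofScalars_eq_zero] at this




/-- A finitely supported distribution with atoms `c, d, 1 - c - d`. -/
def trip (c d : ℝ) : ℕ → ℝ := fun i =>
  if i = 0 then c else if i = 1 then d else if i = 2 then 1 - c - d else 0

lemma trip_zero {c d : ℝ} {i : ℕ} (hi : i ∉ Finset.range 3) : trip c d i = 0 := by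
  simp only [Finset.mem_range] at hi
  unfold trip
  rw [if_neg (by omega), if_neg (by omega), if_neg (by omega)]

lemma trip_prob {c d : ℝ} (hc : 0 ≤ c) (hd : 0 ≤ d) (hcd : c + d ≤ 1) :
    IsProbDist (trip c d) := by
  constructor
  · intro i
    unfold trip
    split
    · exact hc
    split
    · exact hd
    split
    · linarith
    · exact le_refl 0
  · have : HasSum (trip c d) (∑ i ∈ Finset.range 3, trip c d i) := hasSum_sum_of_ne_finset_zero (s := Finset.range 3) (f := trip c d)
      (fun i hi => trip_zero hi)
    have hsum : ∑ i ∈ Finset.range 3, trip c d i = 1 := by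
      simp [Finset.sum_range_succ, trip]
    rwa [hsum] at this

lemma master {f : ℝ → ℝ} {γ : ℝ} (hf0 : f 0 = 0)
    (h : ∀ p q : ℕ → ℝ, IsProbDist p → IsProbDist q →
      (-∑' ij : ℕ × ℕ, f (p ij.1 * q ij.2)) =
        (-∑' i, f (p i)) + (-∑' j, f (q j))
          - γ * (-∑' i, f (p i)) * (-∑' j, f (q j)))
    {c d : ℝ} (hc : 0 ≤ c) (hd : 0 ≤ d) (hcd : c + d ≤ 1) :
    2 * f (1/2 * c) + 2 * f (1/2 * d) + 2 * f (1/2 * (1 - c - d)) =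
      2 * f (1/2) + (f c + f d + f (1 - c - d))
        + γ * (2 * f (1/2)) * (f c + f d + f (1 - c - d)) := by
  have hP : IsProbDist (trip (1/2) (1/2)) := trip_prob (by norm_num) (by norm_num) (by norm_num)
  have hQ : IsProbDist (trip c d) := trip_prob hc hd hcd
  have heq := h _ _ hP hQ
  have h1 : (∑' i, f (trip (1/2 : ℝ) (1/2) i))
      = ∑ i ∈ Finset.range 3, f (trip (1/2 : ℝ) (1/2) i) :=
    tsum_eq_sum (fun i hi => by rw [trip_zero hi, hf0])
  have h2 : (∑' j, f (trip c d j)) = ∑ j ∈ Finset.range 3, f (trip c d j) :=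
    tsum_eq_sum (fun j hj => by rw [trip_zero hj, hf0])
  have h3 : (∑' ij : ℕ × ℕ, f (trip (1/2 : ℝ) (1/2) ij.1 * trip c d ij.2))
      = ∑ ij ∈ Finset.range 3 ×ˢ Finset.range 3,
          f (trip (1/2 : ℝ) (1/2) ij.1 * trip c d ij.2) := by
    apply tsum_eq_sum
    intro ij hij
    rcases not_and_or.mp (fun hh => hij (Finset.mem_product.mpr hh)) with h1 | h2
    · rw [trip_zero h1, zero_mul, hf0]
    · rw [trip_zero h2, mul_zero, hf0]
  rw [h1, h2, h3, Finset.sum_product] at heq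
  simp only [Finset.sum_range_succ, Finset.sum_range_zero, trip] at heq
  norm_num [hf0] at heq
  linear_combination -heq

/-- A function vanishing in triples over all finite 3-atom distributions, analytic at 0,
vanishes near 0. -/
lemma phi_vanish {Φ : ℝ → ℝ} (hana : AnalyticAt ℝ Φ 0) (h0 : Φ 0 = 0)
    (hsum : ∀ c d : ℝ, 0 ≤ c → 0 ≤ d → c + d ≤ 1 → Φ c + Φ d + Φ (1 - c - d) = 0) :
    ∀ᶠ y in nhds (0:ℝ), Φ y = 0 := by
  have hdouble : ∀ t : ℝ, 0 ≤ t → t ≤ 1/4 → Φ (2*t) = 2 * Φ t := by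
    intro t ht ht'
    have h1 := hsum t t ht ht (by linarith)
    rw [show (1:ℝ) - t - t = 1 - 2*t by ring] at h1
    have h2 := hsum (2*t) (1 - 2*t) (by linarith) (by linarith) (by linarith)
    rw [show (1:ℝ) - 2*t - (1 - 2*t) = 0 by ring] at h2
    linarith
  have hhalf : Φ (1/2 : ℝ) = 0 := by
    have h1 := hsum (1/2) (1/2) (by norm_num) (by norm_num) (by norm_num)
    rw [show (1:ℝ) - 1/2 - 1/2 = 0 by ring] at h1
    linarith
  have hlin := doubling_linear (by norm_num : (0:ℝ) < 1/4) hana.differentiableAt h0 hdouble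
  have hder0 : deriv Φ 0 = 0 := by
    have := hlin (1/2) (by norm_num) (by norm_num)
    rw [hhalf] at this
    linarith
  have hzero : ∀ t : ℝ, 0 ≤ t → t < 1/2 → Φ t = 0 := by
    intro t ht ht'
    rw [hlin t ht (by linarith), hder0, zero_mul]
  have := eventually_zero_of_right (by norm_num : (0:ℝ) < 1/2) hana hzero
  filter_upwards [this] with y hy using hy

theorem stmt5 (f : ℝ → ℝ) (hf : IsEntropyGenerator f) (γ : ℝ)
    (h : ∀ p q : ℕ → ℝ, IsProbDist p → IsProbDist q →
      (-∑' ij : ℕ × ℕ, f (p ij.1 * q ij.2)) =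
        (-∑' i, f (p i)) + (-∑' j, f (q j))
          - γ * (-∑' i, f (p i)) * (-∑' j, f (q j))) :
    ∃ q : ℝ, 0 < q ∧ q ≠ 1 ∧
      (∀ x : ℝ, 0 ≤ x → f x = (x - x ^ q) / (1 - q)) ∧ γ = q - 1 := by
  obtain ⟨hAn, hConv, hf0, hf1, hf'1⟩ := hf
  have hτ : f (1/2 : ℝ) < 0 := by
    have h2 := hConv.2 (Set.mem_Ici.mpr (le_refl (0:ℝ))) (Set.mem_Ici.mpr zero_le_one)
      (by norm_num) (by norm_num : (0:ℝ) < 1/2) (by norm_num : (0:ℝ) < 1/2) (by norm_num)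
    simp only [smul_eq_mul] at h2
    rw [hf0, hf1] at h2
    norm_num at h2
    exact h2
  have ha0 : AnalyticAt ℝ f 0 := hAn 0 (Set.mem_Ici.mpr le_rfl)
  -- Φ vanishes near 0
  have hΦev : ∀ᶠ y in nhds (0:ℝ),
      2 * f (1/2 * y) - f y - 2 * f (1/2) * y - γ * (2 * f (1/2)) * f y = 0 := by
    apply phi_vanish
    · have hhalf : AnalyticAt ℝ (fun y : ℝ => f (1/2 * y)) 0 := by
        have hi : AnalyticAt ℝ (fun y : ℝ => 1/2 * y) 0 := analyticAt_const.mul analyticAt_id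
        exact ha0.comp_of_eq hi (by norm_num)
      exact (((analyticAt_const.mul hhalf).sub ha0).sub
        (analyticAt_const.mul analyticAt_id)).sub (analyticAt_const.mul ha0)
    · norm_num [hf0]
    · intro c d hc hd hcd
      have hm := master hf0 h hc hd hcd
      linear_combination hm
  -- power series of f at 0
  obtain ⟨P, hP⟩ := ha0
  have hrep := hasFPowerSeriesAt_iff.mp hP
  rw [Metric.eventually_nhds_iff] at hrep
  obtain ⟨ε, hε, hrep⟩ := hrep
  rw [Metric.eventually_nhds_iff] at hΦev
  obtain ⟨ε₂, hε₂, hΦz⟩ := hΦev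
  have hb0 : P.coeff 0 = 0 := by
    have h9 := hP.coeff_zero 1
    rw [hf0] at h9
    exact h9
  -- coefficient relations
  have hCzero : ∀ n : ℕ, 2 * (P.coeff n * (1/2)^n) - P.coeff n
      - (if n = 1 then 2 * f (1/2) else 0) - γ * (2 * f (1/2)) * P.coeff n = 0 := by
    have key := coeffs_zero_of_hasSum_zero (a := fun n => 2 * (P.coeff n * (1/2)^n) - P.coeff n
      - (if n = 1 then 2 * f (1/2) else 0) - γ * (2 * f (1/2)) * P.coeff n) ?_
    · exact fun n => key n
    rw [Metric.eventually_nhds_iff]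
    refine ⟨min ε ε₂, lt_min hε hε₂, ?_⟩
    intro y hy
    rw [Real.dist_eq, sub_zero] at hy
    have hy1 : |y| < ε := lt_of_lt_of_le hy (min_le_left _ _)
    have hy2 : |y| < ε₂ := lt_of_lt_of_le hy (min_le_right _ _)
    have h1 : HasSum (fun n => (1/2 * y)^n • P.coeff n) (f (0 + 1/2 * y)) := by
      apply hrep
      rw [Real.dist_eq, sub_zero, abs_mul]
      have habs : |(1/2 : ℝ)| = 1/2 := by norm_num
      rw [habs]
      nlinarith [abs_nonneg y]
    have h2 : HasSum (fun n => y^n • P.coeff n) (f (0 + y)) := by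
      apply hrep
      rwa [Real.dist_eq, sub_zero]
    simp only [zero_add, smul_eq_mul] at h1 h2
    have h3 : HasSum (fun n : ℕ => if n = 1 then 2 * f (1/2) * y else 0) (2 * f (1/2) * y) :=
      hasSum_ite_eq 1 _
    have h4 := (((h1.mul_left 2).sub h2).sub h3).sub (h2.mul_left (γ * (2 * f (1/2))))
    have hval : 2 * f (1/2 * y) - f y - 2 * f (1/2) * y - γ * (2 * f (1/2)) * f y = 0 :=
      hΦz (by rwa [Real.dist_eq, sub_zero])
    have h5 : (fun n : ℕ => (2 * (P.coeff n * (1/2)^n) - P.coeff n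
        - (if n = 1 then 2 * f (1/2) else 0) - γ * (2 * f (1/2)) * P.coeff n) * y^n) = (fun n =>
        2 * ((1/2 * y)^n * P.coeff n) - y^n * P.coeff n - (if n = 1 then 2 * f (1/2) * y else 0)
          - γ * (2 * f (1/2)) * (y^n * P.coeff n)) := by
      funext n
      by_cases hn : n = 1
      · subst hn; simp only [if_pos]; ring
      · simp only [if_neg hn]; ring
    rw [h5]
    rw [hval] at h4
    exact h4
  -- the n = 1 relation : 1 + γ b₁ = 0
  have hγb1 : 1 + γ * P.coeff 1 = 0 := by
    have h6 := hCzero 1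
    rw [if_pos rfl] at h6
    have h7 : (2 * f (1/2)) * (1 + γ * P.coeff 1) = 0 := by linear_combination -h6
    rcases mul_eq_zero.mp h7 with h8 | h8
    · exfalso; linarith
    · exact h8
  have hb1ne : P.coeff 1 ≠ 0 := by
    intro hb
    rw [hb, mul_zero] at hγb1
    norm_num at hγb1
  -- relations for n ≠ 1
  have hCn : ∀ n : ℕ, n ≠ 1 → P.coeff n ≠ 0 →
      2 * (1/2 : ℝ)^n - 1 - γ * (2 * f (1/2)) = 0 := by
    intro n hn1 hbn
    have h6 := hCzero n
    rw [if_neg hn1] at h6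
    have h7 : P.coeff n * (2 * (1/2 : ℝ)^n - 1 - γ * (2 * f (1/2))) = 0 := by
      linear_combination h6
    rcases mul_eq_zero.mp h7 with h8 | h8
    · exact absurd h8 hbn
    · exact h8
  by_cases hex : ∃ n : ℕ, 2 ≤ n ∧ P.coeff n ≠ 0
  · obtain ⟨n, hn2, hbn⟩ := hex
    have hn1 : n ≠ 1 := by omega
    have huniq : ∀ m : ℕ, P.coeff m ≠ 0 → m = 1 ∨ m = n := by
      intro m hbm
      by_cases hm1 : m = 1
      · exact Or.inl hm1
      right
      have e1 := hCn n hn1 hbn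
      have e2 := hCn m hm1 hbm
      have e3 : (1/2 : ℝ)^n = (1/2)^m := by linarith
      have e4 : n = m :=
        (pow_right_strictAnti₀ (by norm_num : (0:ℝ) < 1/2) (by norm_num)).injective e3
      omega
    have hfy : ∀ y : ℝ, |y| < ε → f y = P.coeff 1 * y + P.coeff n * y^n := by
      intro y hy
      have h2 : HasSum (fun k => y^k • P.coeff k) (f (0 + y)) :=
        hrep (by rwa [Real.dist_eq, sub_zero])
      simp only [zero_add, smul_eq_mul] at h2
      have h3 : (fun k : ℕ => y^k * P.coeff k) = (fun k =>
          (if k = 1 then P.coeff 1 * y else 0) + (if k = n then P.coeff n * y^n else 0)) := by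
        funext k
        by_cases hk1 : k = 1
        · subst hk1
          rw [if_pos rfl, if_neg (by omega)]
          ring
        · by_cases hkn : k = n
          · subst hkn
            rw [if_neg hk1, if_pos rfl]
            ring
          · have hzero : P.coeff k = 0 := by
              by_contra hc
              rcases huniq k hc with h' | h'
              · exact hk1 h'
              · exact hkn h'
            rw [hzero, if_neg hk1, if_neg hkn]
            ring
      rw [h3] at h2
      have h4 : HasSum (fun k : ℕ =>
          (if k = 1 then P.coeff 1 * y else 0) + (if k = n then P.coeff n * y^n else 0))
          (P.coeff 1 * y + P.coeff n * y^n) := (hasSum_ite_eq 1 _).add (hasSum_ite_eq n _)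
      exact h2.unique h4
    have heqOn : ∀ x ∈ Set.Ici (0:ℝ), f x = P.coeff 1 * x + P.coeff n * x^n := by
      apply eqOn_Ici_of_eventuallyEq hAn
      · intro x _
        exact (analyticAt_const.mul analyticAt_id).add
          (analyticAt_const.mul (analyticAt_id.pow n))
      · filter_upwards [Metric.ball_mem_nhds (0:ℝ) hε] with y hy
        have hy' : |y| < ε := by simpa [Real.dist_eq] using hy
        simp only [Pi.zero_apply]
        rw [hfy y hy']
        ring
    have hsum1 : P.coeff 1 + P.coeff n = 0 := by
      have h10 := heqOn 1 (Set.mem_Ici.mpr zero_le_one)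
      rw [hf1, one_pow, mul_one] at h10
      linarith
    have hderiv1 : P.coeff 1 + P.coeff n * (n:ℝ) = 1 := by
      have hev1 : f =ᶠ[nhds 1] (fun x => P.coeff 1 * x + P.coeff n * x^n) := by
        filter_upwards [Ioi_mem_nhds (zero_lt_one (α := ℝ))] with x hx
        exact heqOn x (Set.mem_Ici.mpr (le_of_lt (Set.mem_Ioi.mp hx)))
      have hg : HasDerivAt (fun x : ℝ => P.coeff 1 * x + P.coeff n * x^n)
          (P.coeff 1 * 1 + P.coeff n * ((n:ℝ) * (1:ℝ)^(n-1))) 1 :=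
        ((hasDerivAt_id (1:ℝ)).const_mul (P.coeff 1)).add
          ((hasDerivAt_pow n (1:ℝ)).const_mul (P.coeff n))
      have h11 : deriv f 1 = P.coeff 1 * 1 + P.coeff n * ((n:ℝ) * (1:ℝ)^(n-1)) := by
        rw [hev1.deriv_eq]
        exact hg.deriv
      rw [hf'1, one_pow, mul_one, mul_one] at h11
      linarith
    have h7 : γ * P.coeff n = 1 := by linear_combination γ * hsum1 - hγb1
    have h8 : ((n:ℝ) - 1) * P.coeff n = 1 := by linear_combination hderiv1 - hsum1
    have hγn : γ = (n:ℝ) - 1 := by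
      have h12 : γ * P.coeff n = ((n:ℝ) - 1) * P.coeff n := h7.trans h8.symm
      exact mul_right_cancel₀ hbn h12
    have hne : (1:ℝ) - (n:ℝ) ≠ 0 := by
      have : (2:ℝ) ≤ (n:ℝ) := by exact_mod_cast hn2
      linarith
    refine ⟨(n:ℝ), by exact_mod_cast (by omega : 0 < n), ?_, ?_, hγn⟩
    · exact_mod_cast (by omega : n ≠ 1)
    · intro x hx
      rw [Real.rpow_natCast, heqOn x hx, eq_div_iff hne]
      linear_combination ((1:ℝ) - (n:ℝ)) * x * hsum1 + (x - x^n) * h8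
  · push_neg at hex
    exfalso
    have hfy : ∀ y : ℝ, |y| < ε → f y = P.coeff 1 * y := by
      intro y hy
      have h2 : HasSum (fun k => y^k • P.coeff k) (f (0 + y)) :=
        hrep (by rwa [Real.dist_eq, sub_zero])
      simp only [zero_add, smul_eq_mul] at h2
      have h3 : (fun k : ℕ => y^k * P.coeff k) = (fun k =>
          if k = 1 then P.coeff 1 * y else 0) := by
        funext k
        by_cases hk1 : k = 1
        · subst hk1
          rw [if_pos rfl]
          ring
        · have hzero : P.coeff k = 0 := by
            rcases Nat.lt_or_ge k 2 with hk | hk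
            · interval_cases k
              · exact hb0
              · exact absurd rfl hk1
            · exact hex k hk
          rw [hzero, if_neg hk1]
          ring
      rw [h3] at h2
      exact h2.unique (hasSum_ite_eq 1 _)
    have heqOn : ∀ x ∈ Set.Ici (0:ℝ), f x = P.coeff 1 * x := by
      apply eqOn_Ici_of_eventuallyEq hAn
      · intro x _
        exact analyticAt_const.mul analyticAt_id
      · filter_upwards [Metric.ball_mem_nhds (0:ℝ) hε] with y hy
        have hy' : |y| < ε := by simpa [Real.dist_eq] using hy
        simp only [Pi.zero_apply]
        rw [hfy y hy']
        ring
    have h10 := heqOn 1 (Set.mem_Ici.mpr zero_le_one)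
    rw [hf1, mul_one] at h10
    exact hb1ne h10.symm
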